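/- For 0 < λ < 4 with θ = π - arccos((λ-2)/2), let R = Q_{n-1}(λ)⁻¹ and define ψ(w̄, λ) := w_0 - Σ_{i=1}^{n-1} w_i (R_{i,1} + R_{i,n-1}). Then ψ(w̄, λ) = (1/cos(nθ/2)) Σ_{i=0}^{n-1} w_i cos((n/2 - i)θ), provided cos(nθ/2) ≠ 0. -/

import Mathlib

open Real Matrix

/-- `Q_k(λ)`: `k×k` symmetric tridiagonal matrix with diagonal `λ-2` and off-diagonal `1`. -/
def Qmat (k : ℕ) (lam : ℝ) : Matrix (Fin k) (Fin k) ℝ :=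
  fun i j => if i = j then lam - 2
    else if i.val + 1 = j.val ∨ j.val + 1 = i.val then 1 else 0

theorem stmt18 (n : ℕ) (hn : 3 ≤ n) (lam : ℝ) (h0 : 0 < lam) (h4 : lam < 4)
    (w : ℕ → ℝ)
    (θ : ℝ) (hθ : θ = Real.pi - Real.arccos ((lam - 2) / 2))
    (hsin : Real.sin (n * θ) ≠ 0) (hcos : Real.cos (n * θ / 2) ≠ 0)
    (hU : IsUnit (Qmat (n - 1) lam).det) :
    w 0 - ∑ i ∈ Finset.range (n - 1),
        w (i + 1) * ((Qmat (n - 1) lam)⁻¹ ⟨i % (n - 1), Nat.mod_lt _ (by omega)⟩ ⟨0, by omega⟩ +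
          (Qmat (n - 1) lam)⁻¹ ⟨i % (n - 1), Nat.mod_lt _ (by omega)⟩ ⟨n - 2, by omega⟩) =
    (1 / Real.cos (n * θ / 2)) *
      ∑ i ∈ Finset.range n, w i * Real.cos (((n : ℝ) / 2 - (i : ℝ)) * θ) := by
  have hlam : lam - 2 = -2 * Real.cos θ := by
    have h1 : (-1:ℝ) ≤ (lam - 2)/2 := by linarith
    have h2 : (lam - 2)/2 ≤ 1 := by linarith
    rw [hθ, Real.cos_pi_sub, Real.cos_arccos h1 h2]; ring
  set m := n - 1 with hm
  have hm2 : 2 ≤ m := by omega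
  set cv := Real.cos (n * θ / 2) with hcv
  set c : ℝ := -1 / cv with hcd
  set x' : ℕ → ℝ := fun j => c * Real.cos (((n:ℝ)/2 - ((j:ℝ)+1)) * θ) with hx'
  have hc1 : c * cv = -1 := by rw [hcd]; field_simp
  have trig2 : ∀ A : ℝ,
      Real.cos (A - θ) + (lam - 2) * Real.cos A + Real.cos (A + θ) = 0 := by
    intro A; rw [hlam, Real.cos_sub, Real.cos_add]; ring
  -- the three trigonometric row identities
  have hxmid : ∀ k : ℕ, (lam - 2) * x' (k+1) + x' (k+2) + x' k = 0 := by
    intro k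
    set A : ℝ := ((n:ℝ)/2 - ((k:ℝ)+2)) * θ with hA
    have e0 : x' (k+1) = c * Real.cos A := by
      simp only [hx']; congr 2; rw [hA]; push_cast; ring
    have e1 : x' (k+2) = c * Real.cos (A - θ) := by
      simp only [hx']; congr 2; rw [hA]; push_cast; ring
    have e2 : x' k = c * Real.cos (A + θ) := by
      simp only [hx']; congr 2; rw [hA]; push_cast; ring
    rw [e0, e1, e2]
    linear_combination c * trig2 A
  have hx0 : (lam - 2) * x' 0 + x' 1 = 1 := by
    set A : ℝ := ((n:ℝ)/2 - 1) * θ with hA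
    have e0 : x' 0 = c * Real.cos A := by
      simp only [hx']; congr 2; rw [hA]; push_cast; ring
    have e1 : x' 1 = c * Real.cos (A - θ) := by
      simp only [hx']; congr 2; rw [hA]; push_cast; ring
    have e2 : Real.cos (A + θ) = cv := by
      rw [hA, hcv]; congr 1; ring
    rw [e0, e1]
    linear_combination c * trig2 A - c * e2 - hc1
  have hxlast : (lam - 2) * x' (m-1) + x' (m-2) = 1 := by
    set A : ℝ := ((n:ℝ)/2 - ((n:ℝ)-1)) * θ with hA
    have cm1 : ((m - 1 : ℕ) : ℝ) = (n:ℝ) - 2 := by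
      have h : m - 1 = n - 2 := by omega
      rw [h, Nat.cast_sub (by omega)]; norm_num
    have cm2 : ((m - 2 : ℕ) : ℝ) = (n:ℝ) - 3 := by
      have h : m - 2 = n - 3 := by omega
      rw [h, Nat.cast_sub (by omega)]; norm_num
    have e0 : x' (m-1) = c * Real.cos A := by
      simp only [hx']; congr 2; rw [cm1, hA]; ring
    have e1 : x' (m-2) = c * Real.cos (A + θ) := by
      simp only [hx']; congr 2; rw [cm2, hA]; ring
    have e2 : Real.cos (A - θ) = cv := by
      rw [hA, hcv, show ((n:ℝ)/2 - ((n:ℝ)-1)) * θ - θ = -(↑n * θ / 2) by ring,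
        Real.cos_neg]
    rw [e0, e1]
    linear_combination c * trig2 A - c * e2 - hc1
  -- entry description of Qmat
  have hQ : ∀ (i j : Fin m), Qmat m lam i j =
      (if (j:ℕ) = (i:ℕ) then lam - 2 else 0) + (if (j:ℕ) = (i:ℕ)+1 then 1 else 0)
        + (if (j:ℕ)+1 = (i:ℕ) then 1 else 0) := by
    intro i j
    simp only [Qmat, Fin.ext_iff]
    split_ifs <;> first | ring1 | (exfalso; omega)
  set b : Fin m → ℝ := fun j =>
      (if j = (⟨0, by omega⟩ : Fin m) then (1:ℝ) else 0)
        + (if j = (⟨n - 2, by omega⟩ : Fin m) then 1 else 0) with hb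
  have key : Qmat m lam *ᵥ (fun j : Fin m => x' j.val) = b := by
    funext i
    have hsum : (Qmat m lam *ᵥ (fun j : Fin m => x' j.val)) i =
        (lam - 2) * x' i.val + (if (i:ℕ)+1 < m then x' ((i:ℕ)+1) else 0)
          + (if 0 < (i:ℕ) then x' ((i:ℕ)-1) else 0) := by
      simp only [Matrix.mulVec, dotProduct, hQ, add_mul, ite_mul, one_mul, zero_mul,
        Finset.sum_add_distrib]
      rw [Fin.sum_univ_eq_sum_range (fun jv => if jv = (i:ℕ) then (lam-2) * x' jv else 0) m,
        Fin.sum_univ_eq_sum_range (fun jv => if jv = (i:ℕ)+1 then x' jv else 0) m,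
        Fin.sum_univ_eq_sum_range (fun jv => if jv+1 = (i:ℕ) then x' jv else 0) m,
        Finset.sum_ite_eq', Finset.sum_ite_eq']
      have h3 : ∑ jv ∈ Finset.range m, (if jv + 1 = (i:ℕ) then x' jv else 0)
          = (if 0 < (i:ℕ) then x' ((i:ℕ)-1) else 0) := by
        rcases Nat.eq_zero_or_pos (i:ℕ) with h | h
        · rw [if_neg (by omega)]
          apply Finset.sum_eq_zero; intro jv _; rw [if_neg (by omega)]
        · rw [if_pos h,
            Finset.sum_congr rfl (fun jv _ =>
              if_congr (by omega : (jv + 1 = (i:ℕ)) ↔ jv = (i:ℕ)-1) rfl rfl),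
            Finset.sum_ite_eq', if_pos (Finset.mem_range.mpr (by omega))]
      rw [h3, if_pos (Finset.mem_range.mpr i.isLt)]
      simp only [Finset.mem_range]
    rw [hsum, hb]
    simp only
    rcases Nat.eq_zero_or_pos (i:ℕ) with h0i | hipos
    · rw [h0i, if_pos (by omega), if_neg (by omega),
        if_pos (by apply Fin.ext; simpa using h0i), if_neg (by
          intro hh; apply_fun Fin.val at hh; simp at hh; omega)]
      simpa using hx0
    · by_cases hil : (i:ℕ) = m - 1
      · rw [hil, if_neg (by omega), if_pos (by omega),
          if_neg (by intro hh; apply_fun Fin.val at hh; simp at hh; omega),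
          if_pos (by apply Fin.ext; simp; omega)]
        simpa [Nat.sub_sub] using hxlast
      · rw [if_pos (by have := i.isLt; omega), if_pos hipos,
          if_neg (by intro hh; apply_fun Fin.val at hh; simp at hh; omega),
          if_neg (by intro hh; apply_fun Fin.val at hh; simp at hh; omega)]
        have h := hxmid ((i:ℕ) - 1)
        rw [show (i:ℕ) - 1 + 1 = (i:ℕ) by omega, show (i:ℕ) - 1 + 2 = (i:ℕ) + 1 by omega] at h
        linarith
  have hinv : (fun j : Fin m => x' j.val) = (Qmat m lam)⁻¹ *ᵥ b := by
    rw [← key, Matrix.mulVec_mulVec, Matrix.nonsing_inv_mul _ hU, Matrix.one_mulVec]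
  have hentry : ∀ (i : Fin m) (h1 : 0 < m) (h2 : n - 2 < m),
      (Qmat m lam)⁻¹ i ⟨0, h1⟩ + (Qmat m lam)⁻¹ i ⟨n - 2, h2⟩ = x' i.val := by
    intro i h1 h2
    have h := congrFun hinv i
    simp only [Matrix.mulVec, dotProduct, hb, mul_add, mul_ite, mul_one, mul_zero,
      Finset.sum_add_distrib, Finset.sum_ite_eq', Finset.mem_univ, if_true] at h
    exact h.symm
  have hLHS : ∑ i ∈ Finset.range m,
      w (i + 1) * ((Qmat m lam)⁻¹ ⟨i % m, Nat.mod_lt _ (by omega)⟩ ⟨0, by omega⟩ +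
        (Qmat m lam)⁻¹ ⟨i % m, Nat.mod_lt _ (by omega)⟩ ⟨n - 2, by omega⟩)
      = ∑ i ∈ Finset.range m, w (i+1) * x' i := by
    refine Finset.sum_congr rfl fun i hi => ?_
    have him : i < m := Finset.mem_range.mp hi
    have hmk : ∀ (h : i % m < m), (⟨i % m, h⟩ : Fin m) = ⟨i, him⟩ :=
      fun h => Fin.ext (Nat.mod_eq_of_lt him)
    rw [hmk, hentry]
  rw [hLHS]
  set S : ℝ := ∑ i ∈ Finset.range m, w (i+1) * Real.cos (((n:ℝ)/2 - ((i:ℝ)+1)) * θ) with hS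
  have hXS : ∑ i ∈ Finset.range m, w (i+1) * x' i = c * S := by
    rw [hS, Finset.mul_sum]
    exact Finset.sum_congr rfl fun i _ => by simp only [hx']; ring
  have hRS : ∑ i ∈ Finset.range n, w i * Real.cos (((n : ℝ) / 2 - (i : ℝ)) * θ)
      = S + w 0 * cv := by
    have hrw : Finset.range n = Finset.range (m+1) := by rw [show m+1 = n by omega]
    rw [hrw, Finset.sum_range_succ', hS, hcv]
    congr 1
    · refine Finset.sum_congr rfl fun i _ => ?_
      congr 2
      push_cast; ring
    · congr 2
      push_cast; ring
  rw [hXS, hRS]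
  rw [hcd]
  field_simp
  ring
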